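/- Let a > b > 0 and m > n > 0 be integers with gcd(a,b) = 1, gcd(m,n) = 1, a − b odd, and m − n odd. Set g₊ = gcd(am + bn, an + bm) and g₋ = gcd(|am − bn|, |an − bm|). Then g₊ · g₋ = gcd(a² − b², m² − n²). -/

import Mathlib

lemma aux_cop (m n : ℤ) (hcop : Int.gcd m n = 1) (hodd : Odd (m - n)) :
    IsCoprime ((m ^ 2 + n ^ 2) : ℤ) (2 * m * n) := by
  have hmn : IsCoprime m n := Int.isCoprime_iff_gcd_eq_one.mpr hcop
  have h2 : IsCoprime ((m ^ 2 + n ^ 2) : ℤ) 2 := by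
    have hodd2 : Odd (m ^ 2 + n ^ 2) := by
      have h : m ^ 2 + n ^ 2 = (m - n) ^ 2 + 2 * (m * n) := by ring
      rw [h]
      exact (hodd.pow).add_even (even_two_mul _)
    obtain ⟨k, hk⟩ := hodd2
    exact ⟨1, -k, by linarith⟩
  have hm : IsCoprime ((m ^ 2 + n ^ 2) : ℤ) m := by
    have h1 : IsCoprime ((n : ℤ) ^ 2) m := hmn.symm.pow_left
    have h2 := h1.add_mul_left_left m
    have e : n ^ 2 + m * m = m ^ 2 + n ^ 2 := by ring
    rwa [e] at h2
  have hn' : IsCoprime ((m ^ 2 + n ^ 2) : ℤ) n := by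
    have h1 : IsCoprime ((m : ℤ) ^ 2) n := hmn.pow_left
    have h2 := h1.add_mul_left_left n
    have e : m ^ 2 + n * n = m ^ 2 + n ^ 2 := by ring
    rwa [e] at h2
  have := h2.mul_right (hm.mul_right hn')
  rwa [show (2 : ℤ) * (m * n) = 2 * m * n by ring] at this

/-- Structural identity for the semi-scaled fibration coordinates:
`g₊ · g₋ = gcd(a² − b², m² − n²)`. (`Int.gcd` returns a natural number
and is insensitive to sign, so the absolute values are built in.) -/
theorem stmt_6 (a b m n : ℤ)
    (hb : 0 < b) (hab : b < a) (hn : 0 < n) (hmn : n < m)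
    (hcop_ab : Int.gcd a b = 1) (hcop_mn : Int.gcd m n = 1)
    (hodd_ab : Odd (a - b)) (hodd_mn : Odd (m - n)) :
    Int.gcd (a * m + b * n) (a * n + b * m) *
      Int.gcd (a * m - b * n) (a * n - b * m) =
    Int.gcd (a ^ 2 - b ^ 2) (m ^ 2 - n ^ 2) := by
  set X := a * m + b * n with hXdef
  set Y := a * n + b * m with hYdef
  set X' := a * m - b * n with hX'def
  set Y' := a * n - b * m with hY'def
  set A := a ^ 2 - b ^ 2 with hAdef
  set M := m ^ 2 - n ^ 2 with hMdef
  have key : Int.gcd X Y * Int.gcd X' Y'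
      = Nat.gcd (Int.gcd (X * X') (X * Y')) (Int.gcd (Y * X') (Y * Y')) := by
    rw [Int.gcd_mul_left, Int.gcd_mul_left, Nat.gcd_mul_right]
    rfl
  rw [key]
  apply Nat.dvd_antisymm
  · -- G4 ∣ D
    set G4 := Nat.gcd (Int.gcd (X * X') (X * Y')) (Int.gcd (Y * X') (Y * Y')) with hG4
    have hg1 : (G4 : ℤ) ∣ X * X' :=
      dvd_trans (Int.natCast_dvd_natCast.mpr (Nat.gcd_dvd_left _ _)) (Int.gcd_dvd_left _ _)
    have hg2 : (G4 : ℤ) ∣ X * Y' :=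
      dvd_trans (Int.natCast_dvd_natCast.mpr (Nat.gcd_dvd_left _ _)) (Int.gcd_dvd_right _ _)
    have hg3 : (G4 : ℤ) ∣ Y * X' :=
      dvd_trans (Int.natCast_dvd_natCast.mpr (Nat.gcd_dvd_right _ _)) (Int.gcd_dvd_left _ _)
    have hg4 : (G4 : ℤ) ∣ Y * Y' :=
      dvd_trans (Int.natCast_dvd_natCast.mpr (Nat.gcd_dvd_right _ _)) (Int.gcd_dvd_right _ _)
    have hA1 : (G4 : ℤ) ∣ (m ^ 2 + n ^ 2) * A := by
      have := dvd_add hg1 hg4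
      rwa [show X * X' + Y * Y' = (m ^ 2 + n ^ 2) * A by
        rw [hXdef, hYdef, hX'def, hY'def, hAdef]; ring] at this
    have hA2 : (G4 : ℤ) ∣ (2 * m * n) * A := by
      have := dvd_add hg2 hg3
      rwa [show X * Y' + Y * X' = (2 * m * n) * A by
        rw [hXdef, hYdef, hX'def, hY'def, hAdef]; ring] at this
    have hM1 : (G4 : ℤ) ∣ (a ^ 2 + b ^ 2) * M := by
      have := dvd_sub hg1 hg4
      rwa [show X * X' - Y * Y' = (a ^ 2 + b ^ 2) * M by
        rw [hXdef, hYdef, hX'def, hY'def, hMdef]; ring] at this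
    have hM2 : (G4 : ℤ) ∣ (2 * a * b) * M := by
      have := dvd_sub hg3 hg2
      rwa [show Y * X' - X * Y' = (2 * a * b) * M by
        rw [hXdef, hYdef, hX'def, hY'def, hMdef]; ring] at this
    obtain ⟨u, v, huv⟩ := aux_cop m n hcop_mn hodd_mn
    have hdA : (G4 : ℤ) ∣ A := by
      have : A = u * ((m ^ 2 + n ^ 2) * A) + v * ((2 * m * n) * A) := by
        rw [hAdef]; linear_combination (b ^ 2 - a ^ 2) * huv
      rw [this]
      exact dvd_add (hA1.mul_left u) (hA2.mul_left v)
    obtain ⟨u', v', huv'⟩ := aux_cop a b hcop_ab hodd_ab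
    have hdM : (G4 : ℤ) ∣ M := by
      have : M = u' * ((a ^ 2 + b ^ 2) * M) + v' * ((2 * a * b) * M) := by
        rw [hMdef]; linear_combination (n ^ 2 - m ^ 2) * huv'
      rw [this]
      exact dvd_add (hM1.mul_left u') (hM2.mul_left v')
    exact Int.natCast_dvd_natCast.mp (Int.dvd_coe_gcd hdA hdM)
  · -- D ∣ G4
    set D := Int.gcd A M with hD
    have hDA : (D : ℤ) ∣ A := Int.gcd_dvd_left _ _
    have hDM : (D : ℤ) ∣ M := Int.gcd_dvd_right _ _
    have p1 : (D : ℤ) ∣ X * X' := by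
      rw [show X * X' = m ^ 2 * A + b ^ 2 * M by
        rw [hXdef, hX'def, hAdef, hMdef]; ring]
      exact dvd_add (hDA.mul_left _) (hDM.mul_left _)
    have p2 : (D : ℤ) ∣ X * Y' := by
      rw [show X * Y' = m * n * A - a * b * M by
        rw [hXdef, hY'def, hAdef, hMdef]; ring]
      exact dvd_sub (hDA.mul_left _) (hDM.mul_left _)
    have p3 : (D : ℤ) ∣ Y * X' := by
      rw [show Y * X' = m * n * A + a * b * M by
        rw [hYdef, hX'def, hAdef, hMdef]; ring]
      exact dvd_add (hDA.mul_left _) (hDM.mul_left _)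
    have p4 : (D : ℤ) ∣ Y * Y' := by
      rw [show Y * Y' = n ^ 2 * A - b ^ 2 * M by
        rw [hYdef, hY'def, hAdef, hMdef]; ring]
      exact dvd_sub (hDA.mul_left _) (hDM.mul_left _)
    exact Nat.dvd_gcd
      (Int.natCast_dvd_natCast.mp (Int.dvd_coe_gcd p1 p2))
      (Int.natCast_dvd_natCast.mp (Int.dvd_coe_gcd p3 p4))
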